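/- Let G be a finite group acting transitively on a finite set Ω with point stabilizer H, and let d_H be the minimum degree of a nontrivial irreducible component of the permutation representation 1_H^G. If X is a probability distribution on G and Y is a probability distribution on Ω, then ‖X ∗ Y − U_Ω‖ ≤ √(|G|/d_H) · ‖X − U_G‖ · ‖Y − U_Ω‖. -/

import Mathlib

open scoped BigOperators
open scoped RealInnerProductSpace

/-- The convolution of a function on a finite group `G` with a function on a
`G`-set `Ω`: `(X ∗ Y)(ω) = ∑_{g ∈ G} X(g) Y(g⁻¹ • ω)`. -/
noncomputable def convAct {G : Type*} [Group G] [Fintype G] {Ω : Type*} [MulAction G Ω]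
    (X : G → ℝ) (Y : Ω → ℝ) : Ω → ℝ :=
  fun ω => ∑ g : G, X g * Y (g⁻¹ • ω)

/-- The Euclidean norm of a function on a finite set. -/
noncomputable def norm2 {Ω : Type*} [Fintype Ω] (f : Ω → ℝ) : ℝ :=
  Real.sqrt (∑ ω : Ω, f ω ^ 2)

/-- A subspace of `ℝ^Ω` invariant under the permutation action of `G`. -/
def PermInvariant (G : Type*) [Group G] {Ω : Type*} [MulAction G Ω]
    (p : Submodule ℝ (Ω → ℝ)) : Prop :=
  ∀ (g : G) (f : Ω → ℝ), f ∈ p → (fun ω => f (g⁻¹ • ω)) ∈ p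

/-- A nontrivial irreducible component of the permutation representation of `G` on `ℝ^Ω`:
a nonzero invariant subspace with no proper nonzero invariant subspace, on which `G`
acts nontrivially. -/
def IsNontrivIrredComponent (G : Type*) [Group G] {Ω : Type*} [MulAction G Ω]
    (p : Submodule ℝ (Ω → ℝ)) : Prop :=
  PermInvariant G p ∧ p ≠ ⊥ ∧
    (∀ q : Submodule ℝ (Ω → ℝ), q ≤ p → PermInvariant G q → q = ⊥ ∨ q = p) ∧
    (∃ (g : G) (f : Ω → ℝ), f ∈ p ∧ (fun ω => f (g⁻¹ • ω)) ≠ f)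

section Aux

variable {G : Type*} [Group G] [Fintype G] {Ω : Type*} [Fintype Ω] [MulAction G Ω]

/-- reindexing a sum over `Ω` by the action of `g⁻¹`. -/
lemma sum_smul_reindex (g : G) (f : Ω → ℝ) : ∑ ω : Ω, f (g⁻¹ • ω) = ∑ ω : Ω, f ω :=
  Fintype.sum_bijective (fun ω => g⁻¹ • ω) (MulAction.bijective g⁻¹)
    (fun ω => f (g⁻¹ • ω)) f (fun _ => rfl) |>.symm ▸ rfl

/-- reindexing a sum over `G` by left multiplication. -/
lemma sum_mul_reindex (g : G) (f : G → ℝ) : ∑ h : G, f (g⁻¹ * h) = ∑ h : G, f h :=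
  Fintype.sum_bijective (fun h => g⁻¹ * h) (Group.mulLeft_bijective g⁻¹)
    (fun h => f (g⁻¹ * h)) f (fun _ => rfl) |>.symm ▸ rfl

/-- Every nonzero invariant subspace contains a minimal nonzero invariant subspace. -/
lemma exists_minimal_invariant :
    ∀ (n : ℕ) (p : Submodule ℝ (Ω → ℝ)), Module.finrank ℝ p ≤ n →
      PermInvariant G p → p ≠ ⊥ →
      ∃ q : Submodule ℝ (Ω → ℝ), q ≤ p ∧ PermInvariant G q ∧ q ≠ ⊥ ∧
        ∀ r, r ≤ q → PermInvariant G r → r = ⊥ ∨ r = q := by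
  intro n
  induction n with
  | zero =>
    intro p hle hinv hne
    exact absurd (Submodule.finrank_eq_zero.mp (Nat.le_zero.mp hle)) hne
  | succ n ih =>
    intro p hle hinv hne
    by_cases hmin : ∀ r, r ≤ p → PermInvariant G r → r = ⊥ ∨ r = p
    · exact ⟨p, le_rfl, hinv, hne, hmin⟩
    · push_neg at hmin
      obtain ⟨r, hrp, hrinv, hrbot, hrne⟩ := hmin
      have hlt : r < p := lt_of_le_of_ne hrp hrne
      have : Module.finrank ℝ r ≤ n := by
        have := Submodule.finrank_lt_finrank_of_lt (s := r) (t := p) hlt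
        omega
      obtain ⟨q, hq1, hq2, hq3, hq4⟩ := ih r this hrinv hrbot
      exact ⟨q, hq1.trans hrp, hq2, hq3, hq4⟩

/-- A positive semidefinite symmetric operator kills vectors on which its quadratic form
vanishes. -/
lemma psd_apply_eq_zero {E : Type*} [NormedAddCommGroup E] [InnerProductSpace ℝ E]
    (B : E →ₗ[ℝ] E) (hsym : ∀ x y : E, ⟪B x, y⟫ = ⟪x, B y⟫) (hpos : ∀ x : E, 0 ≤ ⟪B x, x⟫)
    (x : E) (hx : ⟪B x, x⟫ = 0) : B x = 0 := by
  set a : ℝ := ⟪B (B x), B x⟫ with ha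
  set b : ℝ := ⟪B x, B x⟫ with hb
  have ha0 : 0 ≤ a := hpos _
  have hb0 : 0 ≤ b := real_inner_self_nonneg
  set t : ℝ := -(b / (a + 1)) with ht
  have hq : 0 ≤ ⟪B (x + t • B x), x + t • B x⟫ := hpos _
  have hexp : ⟪B (x + t • B x), x + t • B x⟫ = 2 * t * b + t ^ 2 * a := by
    rw [map_add, map_smul, inner_add_left, inner_add_right, inner_add_right,
      real_inner_smul_left, real_inner_smul_left, real_inner_smul_right,
      real_inner_smul_right, hx]
    have h1 : ⟪B (B x), x⟫ = b := by rw [hsym (B x) x, hb]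
    rw [h1]
    ring
  rw [hexp] at hq
  have hane : (0:ℝ) < a + 1 := by linarith
  have hcalc : (a + 1) ^ 2 * (2 * t * b + t ^ 2 * a) = -(b ^ 2 * (a + 2)) := by
    rw [ht]; field_simp; ring
  have hbz : b = 0 := by nlinarith [sq_nonneg b, mul_nonneg (sq_nonneg (a+1)) hq]
  exact inner_self_eq_zero.mp (hb ▸ hbz)

/-- Trace bound: if `S` acts on a subspace `E` with `‖S x‖² = lam ‖x‖²`, then
`lam · dim E` is at most the Frobenius norm squared of `S`, expressed through its rows. -/
lemma trace_bound {ι : Type*} [Fintype ι] {κ : Type*} [Fintype κ]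
    (S : EuclideanSpace ℝ ι →ₗ[ℝ] EuclideanSpace ℝ κ) (r : κ → EuclideanSpace ℝ ι)
    (hSr : ∀ (x : EuclideanSpace ℝ ι) (ω : κ), S x ω = ⟪r ω, x⟫)
    (E : Submodule ℝ (EuclideanSpace ℝ ι)) (lam : ℝ)
    (hSE : ∀ x : EuclideanSpace ℝ ι, x ∈ E → ‖S x‖ ^ 2 = lam * ‖x‖ ^ 2) :
    lam * (Module.finrank ℝ E : ℝ) ≤ ∑ ω : κ, ‖r ω‖ ^ 2 := by
  classical
  have hnormκ : ∀ x : EuclideanSpace ℝ κ, ‖x‖ ^ 2 = ∑ ω : κ, x ω ^ 2 := fun x => by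
    rw [← real_inner_self_eq_norm_sq, PiLp.inner_apply]
    refine Finset.sum_congr rfl fun ω _ => ?_
    simp [RCLike.inner_apply, conj_trivial, sq]
  set mE : ℕ := Module.finrank ℝ E with hmE
  have bE : OrthonormalBasis (Fin mE) ℝ E := stdOrthonormalBasis ℝ E
  have hfamON : Orthonormal ℝ (fun i : Fin mE => ((bE i : E) : EuclideanSpace ℝ ι)) := by
    rw [orthonormal_iff_ite]
    intro i j
    have h := (orthonormal_iff_ite.mp bE.orthonormal) i j
    rw [← Submodule.coe_inner, h]
  obtain ⟨u, b, hvu, hb⟩ := hfamON.toSubtypeRange.exists_orthonormalBasis_extension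
  have hFrob : ∑ i : u, ‖S (b i)‖ ^ 2 = ∑ ω : κ, ‖r ω‖ ^ 2 := by
    calc ∑ i : u, ‖S (b i)‖ ^ 2 = ∑ i : u, ∑ ω : κ, (S (b i) ω) ^ 2 :=
          Finset.sum_congr rfl fun i _ => hnormκ _
      _ = ∑ ω : κ, ∑ i : u, (S (b i) ω) ^ 2 := Finset.sum_comm
      _ = ∑ ω : κ, ‖r ω‖ ^ 2 := by
          refine Finset.sum_congr rfl fun ω _ => ?_
          have hterm : ∀ i : u, (S (b i) ω) ^ 2 = ⟪r ω, b i⟫ * ⟪b i, r ω⟫ := by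
            intro i
            rw [hSr (b i) ω, real_inner_comm (b i), sq]
          rw [Finset.sum_congr rfl fun i _ => hterm i, b.sum_inner_mul_inner,
            real_inner_self_eq_norm_sq]
  have hinj : Function.Injective (fun i : Fin mE => ((bE i : E) : EuclideanSpace ℝ ι)) :=
    hfamON.linearIndependent.injective
  set vf : Finset (EuclideanSpace ℝ ι) :=
    Finset.image (fun i : Fin mE => ((bE i : E) : EuclideanSpace ℝ ι)) Finset.univ with hvf
  have hvfcard : vf.card = mE := by
    rw [hvf, Finset.card_image_of_injective _ hinj, Finset.card_univ, Fintype.card_fin]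
  have hvfu : vf ⊆ u := by
    intro x hx
    rw [hvf, Finset.mem_image] at hx
    obtain ⟨i, _, rfl⟩ := hx
    exact hvu (Set.mem_range_self i)
  have hvfval : ∀ x ∈ vf, ‖S x‖ ^ 2 = lam := by
    intro x hx
    rw [hvf, Finset.mem_image] at hx
    obtain ⟨i, _, rfl⟩ := hx
    have hxE : ((bE i : E) : EuclideanSpace ℝ ι) ∈ E := (bE i).2
    have hnorm1 : ‖((bE i : E) : EuclideanSpace ℝ ι)‖ = 1 := hfamON.1 i
    rw [hSE _ hxE, hnorm1, one_pow, mul_one]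
  have h1 : ∑ i : u, ‖S (b i)‖ ^ 2 = ∑ x ∈ u, ‖S x‖ ^ 2 := by
    simp only [hb]
    exact Finset.sum_coe_sort u (fun x => ‖S x‖ ^ 2)
  have h2 : ∑ x ∈ vf, ‖S x‖ ^ 2 ≤ ∑ x ∈ u, ‖S x‖ ^ 2 :=
    Finset.sum_le_sum_of_subset_of_nonneg hvfu (fun x _ _ => sq_nonneg _)
  have h3 : ∑ x ∈ vf, ‖S x‖ ^ 2 = lam * mE := by
    rw [Finset.sum_congr rfl hvfval, Finset.sum_const, hvfcard, nsmul_eq_mul, mul_comm]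
  rw [← hFrob, h1]
  linarith

set_option maxHeartbeats 2000000 in
/-- The key operator-norm bound. -/
lemma key_bound [MulAction.IsPretransitive G Ω]
    (d : ℕ)
    (hd : IsLeast {k : ℕ | ∃ p : Submodule ℝ (Ω → ℝ),
      IsNontrivIrredComponent G p ∧ k = Module.finrank ℝ p} d)
    (Y' : Ω → ℝ) (hY' : ∑ ω : Ω, Y' ω = 0) (X' : G → ℝ) :
    ∑ ω : Ω, (∑ g : G, X' g * Y' (g⁻¹ • ω)) ^ 2 ≤
      ((Fintype.card G : ℝ) / d) * (∑ g : G, X' g ^ 2) * (∑ ω : Ω, Y' ω ^ 2) := by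
  classical
  obtain ⟨⟨p0, hp0, hdp0⟩, hlb⟩ := hd
  have hdpos : 0 < d := by
    rw [hdp0]
    have : Nontrivial p0 := Submodule.nontrivial_iff_ne_bot.mpr hp0.2.1
    exact Module.finrank_pos
  -- the linear map S
  obtain ⟨S, hSapp⟩ : ∃ S : EuclideanSpace ℝ G →ₗ[ℝ] EuclideanSpace ℝ Ω,
      ∀ (x : EuclideanSpace ℝ G) (ω : Ω), S x ω = ∑ g : G, x g * Y' (g⁻¹ • ω) :=
    ⟨{ toFun := fun x => WithLp.toLp 2 (fun ω => ∑ g : G, x g * Y' (g⁻¹ • ω))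
       map_add' := fun x y => by
         ext ω
         simp [add_mul, Finset.sum_add_distrib]
       map_smul' := fun c x => by
         ext ω
         simp [Finset.mul_sum, mul_assoc] }, fun x ω => rfl⟩
  have hinnerG : ∀ x y : EuclideanSpace ℝ G, ⟪x, y⟫ = ∑ g : G, x g * y g := fun x y => by
    simp [PiLp.inner_apply, RCLike.inner_apply, conj_trivial]
    exact Finset.sum_congr rfl fun _ _ => mul_comm _ _
  have hinnerΩ : ∀ x y : EuclideanSpace ℝ Ω, ⟪x, y⟫ = ∑ ω : Ω, x ω * y ω := fun x y => by
    simp [PiLp.inner_apply, RCLike.inner_apply, conj_trivial]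
    exact Finset.sum_congr rfl fun _ _ => mul_comm _ _
  have hnormG : ∀ x : EuclideanSpace ℝ G, ‖x‖ ^ 2 = ∑ g : G, x g ^ 2 := fun x => by
    rw [← real_inner_self_eq_norm_sq, hinnerG]
    exact Finset.sum_congr rfl fun g _ => (sq (x g)).symm
  have hnormΩ : ∀ x : EuclideanSpace ℝ Ω, ‖x‖ ^ 2 = ∑ ω : Ω, x ω ^ 2 := fun x => by
    rw [← real_inner_self_eq_norm_sq, hinnerΩ]
    exact Finset.sum_congr rfl fun ω _ => (sq (x ω)).symm
  -- maximize ‖S x‖² on the unit sphere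
  have hsphne : (Metric.sphere (0 : EuclideanSpace ℝ G) 1).Nonempty := by
    refine ⟨EuclideanSpace.single 1 1, ?_⟩
    simp [mem_sphere_zero_iff_norm, EuclideanSpace.norm_single]
  have hScont : Continuous fun x : EuclideanSpace ℝ G => ‖S x‖ ^ 2 :=
    ((S.continuous_of_finiteDimensional).norm).pow 2
  obtain ⟨x0, hx0mem, hx0max⟩ :=
    (isCompact_sphere (0 : EuclideanSpace ℝ G) 1).exists_isMaxOn hsphne hScont.continuousOn
  have hx0norm : ‖x0‖ = 1 := by simpa [mem_sphere_zero_iff_norm] using hx0mem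
  set lam : ℝ := ‖S x0‖ ^ 2 with hlamdef
  have hlam0 : 0 ≤ lam := sq_nonneg _
  have hbound : ∀ x : EuclideanSpace ℝ G, ‖S x‖ ^ 2 ≤ lam * ‖x‖ ^ 2 := by
    intro x
    rcases eq_or_ne x 0 with h | h
    · simp [h]
    · have hxn : ‖x‖ ≠ 0 := norm_ne_zero_iff.mpr h
      have hmem : (‖x‖⁻¹ • x) ∈ Metric.sphere (0 : EuclideanSpace ℝ G) 1 := by
        simp [mem_sphere_zero_iff_norm, norm_smul, abs_of_nonneg (norm_nonneg x),
          inv_mul_cancel₀ hxn]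
      have := hx0max hmem
      have h2 : ‖S (‖x‖⁻¹ • x)‖ ^ 2 ≤ lam := this
      rw [map_smul, norm_smul] at h2
      have h3 : (‖x‖⁻¹) ^ 2 * ‖S x‖ ^ 2 ≤ lam := by
        simpa [mul_pow, abs_of_nonneg (inv_nonneg.mpr (norm_nonneg x))] using h2
      have hx2 : (0:ℝ) < ‖x‖ ^ 2 := by positivity
      rw [inv_pow] at h3
      calc ‖S x‖ ^ 2 = (‖x‖ ^ 2)⁻¹ * ‖S x‖ ^ 2 * ‖x‖ ^ 2 := by field_simp
        _ ≤ lam * ‖x‖ ^ 2 := by nlinarith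
  -- the goal in terms of S
  set Xe : EuclideanSpace ℝ G := WithLp.toLp 2 X' with hXe
  have hgoal_lhs : ∑ ω : Ω, (∑ g : G, X' g * Y' (g⁻¹ • ω)) ^ 2 = ‖S Xe‖ ^ 2 := by
    rw [hnormΩ]
    exact Finset.sum_congr rfl fun ω _ => by rw [hSapp]
  have hX'2 : ∑ g : G, X' g ^ 2 = ‖Xe‖ ^ 2 := (hnormG Xe).symm
  -- the key eigenvalue bound
  have hkey : lam * d ≤ (Fintype.card G : ℝ) * ∑ ω : Ω, Y' ω ^ 2 := by
    rcases eq_or_lt_of_le hlam0 with h0 | hlampos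
    · rw [← h0, zero_mul]
      positivity
    -- the symmetric operator A = Sᵀ S and B = lam·id - A
    · obtain ⟨B, hBapp⟩ : ∃ B : EuclideanSpace ℝ G →ₗ[ℝ] EuclideanSpace ℝ G,
          ∀ x : EuclideanSpace ℝ G, B x = lam • x - (LinearMap.adjoint S) (S x) :=
        ⟨lam • LinearMap.id - (LinearMap.adjoint S) ∘ₗ S, fun x => rfl⟩
      have hBinner : ∀ x y : EuclideanSpace ℝ G, ⟪B x, y⟫ = lam * ⟪x, y⟫ - ⟪S x, S y⟫ := by
        intro x y
        rw [hBapp, inner_sub_left, real_inner_smul_left, LinearMap.adjoint_inner_left]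
      have hBsym : ∀ x y : EuclideanSpace ℝ G, ⟪B x, y⟫ = ⟪x, B y⟫ := by
        intro x y
        rw [hBinner, real_inner_comm (B y) x, hBinner, real_inner_comm x y,
          real_inner_comm (S x) (S y)]
      have hBpos : ∀ x : EuclideanSpace ℝ G, 0 ≤ ⟪B x, x⟫ := by
        intro x
        rw [hBinner, real_inner_self_eq_norm_sq, real_inner_self_eq_norm_sq]
        have := hbound x
        linarith
      have hBx0 : B x0 = 0 := by
        refine psd_apply_eq_zero B hBsym hBpos x0 ?_
        rw [hBinner, real_inner_self_eq_norm_sq, real_inner_self_eq_norm_sq, hx0norm, ← hlamdef]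
        ring
      -- translation operators
      have hρtype : True := trivial
      set ρG : G → EuclideanSpace ℝ G → EuclideanSpace ℝ G :=
        fun g x => WithLp.toLp 2 (fun h => x (g⁻¹ * h)) with hρG
      set ρΩ : G → EuclideanSpace ℝ Ω → EuclideanSpace ℝ Ω :=
        fun g x => WithLp.toLp 2 (fun ω => x (g⁻¹ • ω)) with hρΩ
      -- equivariance of S
      have hScomm : ∀ (g : G) (x : EuclideanSpace ℝ G), S (ρG g x) = ρΩ g (S x) := by
        intro g x
        ext ω
        show S (ρG g x) ω = S x (g⁻¹ • ω)
        rw [hSapp, hSapp]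
        refine (Fintype.sum_bijective (fun h => g * h) (Group.mulLeft_bijective g)
          (fun h => x h * Y' (h⁻¹ • g⁻¹ • ω)) (fun h => ρG g x h * Y' (h⁻¹ • ω))
          fun h => ?_).symm
        show x h * Y' (h⁻¹ • g⁻¹ • ω) = x (g⁻¹ * (g * h)) * Y' ((g * h)⁻¹ • ω)
        rw [inv_mul_cancel_left, mul_inv_rev, mul_smul]
      have hshiftG : ∀ (g : G) (x z : EuclideanSpace ℝ G),
          ⟪ρG g x, z⟫ = ⟪x, ρG g⁻¹ z⟫ := by
        intro g x z
        rw [hinnerG, hinnerG]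
        refine (Fintype.sum_bijective (fun h => g * h) (Group.mulLeft_bijective g)
          (fun h => x h * ρG g⁻¹ z h) (fun h => ρG g x h * z h) fun h => ?_).symm
        show x h * z (g⁻¹⁻¹ * h) = x (g⁻¹ * (g * h)) * z (g * h)
        rw [inv_mul_cancel_left, inv_inv]
      have hshiftΩ : ∀ (g : G) (x z : EuclideanSpace ℝ Ω),
          ⟪ρΩ g x, z⟫ = ⟪x, ρΩ g⁻¹ z⟫ := by
        intro g x z
        rw [hinnerΩ, hinnerΩ]
        refine (Fintype.sum_bijective (fun ω => g • ω) (MulAction.bijective g)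
          (fun ω => x ω * ρΩ g⁻¹ z ω) (fun ω => ρΩ g x ω * z ω) fun ω => ?_).symm
        show x ω * z (g⁻¹⁻¹ • ω) = x (g⁻¹ • g • ω) * z (g • ω)
        rw [inv_smul_smul, inv_inv]
      -- the kernel of B is invariant
      have hEinv : ∀ (g : G) (x : EuclideanSpace ℝ G), B x = 0 → B (ρG g x) = 0 := by
        intro g x hx
        have hz : ∀ z : EuclideanSpace ℝ G, ⟪B (ρG g x), z⟫ = ⟪B x, ρG g⁻¹ z⟫ := by
          intro z
          rw [hBinner, hBinner]
          have p1 : ⟪ρG g x, z⟫ = ⟪x, ρG g⁻¹ z⟫ := hshiftG g x z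
          have p2 : ⟪S (ρG g x), S z⟫ = ⟪S x, S (ρG g⁻¹ z)⟫ := by
            rw [hScomm g x, hshiftΩ g (S x) (S z), ← hScomm g⁻¹ z]
          rw [p1, p2]
        have : ⟪B (ρG g x), B (ρG g x)⟫ = 0 := by
          rw [hz, hx, inner_zero_left]
        exact inner_self_eq_zero.mp this
      -- the eigenspace E
      set E : Submodule ℝ (EuclideanSpace ℝ G) := LinearMap.ker B with hEdef
      have hmemE : ∀ x : EuclideanSpace ℝ G, x ∈ E ↔ B x = 0 := fun x => LinearMap.mem_ker
      have hx0E : x0 ∈ E := (hmemE x0).mpr hBx0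
      have hSE : ∀ x : EuclideanSpace ℝ G, x ∈ E → ‖S x‖ ^ 2 = lam * ‖x‖ ^ 2 := by
        intro x hx
        have h0 : ⟪B x, x⟫ = 0 := by rw [(hmemE x).mp hx, inner_zero_left]
        rw [hBinner, real_inner_self_eq_norm_sq, real_inner_self_eq_norm_sq] at h0
        linarith
      -- the image subspace in the plain function space
      set V : Submodule ℝ (EuclideanSpace ℝ Ω) := E.map S with hVdef
      set Vp : Submodule ℝ (Ω → ℝ) :=
        V.map (WithLp.linearEquiv 2 ℝ (Ω → ℝ)).toLinearMap with hVpdef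
      have hmemVp : ∀ f : Ω → ℝ, f ∈ Vp ↔ ∃ x : EuclideanSpace ℝ G, x ∈ E ∧ S x = f := by
        intro f
        constructor
        · rintro ⟨y, hy, rfl⟩
          obtain ⟨x, hx, rfl⟩ := hy
          exact ⟨x, hx, rfl⟩
        · rintro ⟨x, hx, rfl⟩
          exact ⟨S x, ⟨x, hx, rfl⟩, rfl⟩
      -- Ω is nonempty
      have hSx0ne : S x0 ≠ 0 := by
        intro h
        have h2 : lam = 0 := by simp [hlamdef, h]
        linarith
      obtain ⟨ω0, hω0⟩ : ∃ ω : Ω, S x0 ω ≠ 0 := by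
        by_contra hno
        push_neg at hno
        exact hSx0ne (PiLp.ext hno)
      -- Vp is invariant, nonzero, and all its members sum to zero
      have hVpinv : PermInvariant G Vp := by
        intro g f hf
        obtain ⟨x, hx, rfl⟩ := (hmemVp f).mp hf
        refine (hmemVp _).mpr ⟨ρG g x,
          (hmemE _).mpr (hEinv g x ((hmemE x).mp hx)), ?_⟩
        rw [hScomm g x]
      have hVpne : Vp ≠ ⊥ := by
        intro hbot
        have : (S x0 : Ω → ℝ) ∈ Vp := (hmemVp _).mpr ⟨x0, hx0E, rfl⟩
        rw [hbot, Submodule.mem_bot] at this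
        exact hω0 (by rw [this]; rfl)
      have hVpsum : ∀ f : Ω → ℝ, f ∈ Vp → ∑ ω : Ω, f ω = 0 := by
        intro f hf
        obtain ⟨x, _, rfl⟩ := (hmemVp f).mp hf
        have : ∀ ω : Ω, S x ω = ∑ g : G, x g * Y' (g⁻¹ • ω) := fun ω => hSapp x ω
        calc ∑ ω : Ω, S x ω = ∑ ω : Ω, ∑ g : G, x g * Y' (g⁻¹ • ω) :=
              Finset.sum_congr rfl fun ω _ => hSapp x ω
          _ = ∑ g : G, x g * ∑ ω : Ω, Y' (g⁻¹ • ω) := by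
              rw [Finset.sum_comm]
              exact Finset.sum_congr rfl fun g _ => (Finset.mul_sum _ _ _).symm
          _ = 0 := by
              refine Finset.sum_eq_zero fun g _ => ?_
              rw [sum_smul_reindex g Y', hY', mul_zero]
      -- a minimal invariant subspace of Vp
      obtain ⟨W, hWle, hWinv, hWne, hWmin⟩ :=
        exists_minimal_invariant (Module.finrank ℝ Vp) Vp le_rfl hVpinv hVpne
      have hWnontriv : ∃ (g : G) (f : Ω → ℝ), f ∈ W ∧ (fun ω => f (g⁻¹ • ω)) ≠ f := by
        by_contra hno
        push_neg at hno
        refine hWne ((Submodule.eq_bot_iff W).mpr fun f hf => ?_)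
        have hconst : ∀ ω : Ω, f ω = f ω0 := by
          intro ω
          obtain ⟨g, hg⟩ := MulAction.exists_smul_eq G ω ω0
          have : (fun ω' => f (g⁻¹ • ω')) = f := hno g f hf
          calc f ω = f (g⁻¹ • ω0) := by rw [← hg, inv_smul_smul]
            _ = (fun ω' => f (g⁻¹ • ω')) ω0 := rfl
            _ = f ω0 := by rw [this]
        have hsum : ∑ ω : Ω, f ω = 0 := hVpsum f (hWle hf)
        have : (Fintype.card Ω : ℝ) * f ω0 = 0 := by
          rw [← hsum, Finset.sum_congr rfl fun ω _ => hconst ω, Finset.sum_const,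
            Finset.card_univ, nsmul_eq_mul]
        have hcard : (0:ℝ) < (Fintype.card Ω : ℝ) := by
          have : Nonempty Ω := ⟨ω0⟩
          exact_mod_cast Fintype.card_pos
        have hfω0 : f ω0 = 0 := by
          rcases mul_eq_zero.mp this with h | h
          · exact absurd h (ne_of_gt hcard)
          · exact h
        funext ω
        rw [hconst ω, hfω0]
        rfl
      -- d is at most the dimension of E
      have hdE : (d : ℝ) ≤ (Module.finrank ℝ E : ℝ) := by
        have h1 : d ≤ Module.finrank ℝ W := hlb ⟨W, ⟨hWinv, hWne, hWmin, hWnontriv⟩, rfl⟩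
        have h2 : Module.finrank ℝ W ≤ Module.finrank ℝ Vp := Submodule.finrank_mono hWle
        have h3 : Module.finrank ℝ Vp = Module.finrank ℝ V := by
          rw [hVpdef]
          exact (LinearEquiv.finrank_map_eq (WithLp.linearEquiv 2 ℝ (Ω → ℝ)) V)
        have h4 : Module.finrank ℝ V ≤ Module.finrank ℝ E := by
          rw [hVdef]
          exact Submodule.finrank_map_le S E
        have : d ≤ Module.finrank ℝ E := by omega
        exact_mod_cast this
      -- apply the trace bound
      obtain ⟨rvec, hrvec⟩ : ∃ r : Ω → EuclideanSpace ℝ G, ∀ (ω : Ω) (g : G), r ω g = Y' (g⁻¹ • ω) :=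
        ⟨fun ω => WithLp.toLp 2 (fun g => Y' (g⁻¹ • ω)), fun ω g => rfl⟩
      have hSr : ∀ (x : EuclideanSpace ℝ G) (ω : Ω), S x ω = ⟪rvec ω, x⟫ := by
        intro x ω
        rw [hSapp, hinnerG]
        exact Finset.sum_congr rfl fun g _ => by rw [hrvec]; ring
      have htrace := trace_bound S rvec hSr E lam hSE
      have hrnorm : ∑ ω : Ω, ‖rvec ω‖ ^ 2 = (Fintype.card G : ℝ) * ∑ ω : Ω, Y' ω ^ 2 := by
        calc ∑ ω : Ω, ‖rvec ω‖ ^ 2 = ∑ ω : Ω, ∑ g : G, (Y' (g⁻¹ • ω)) ^ 2 := by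
              refine Finset.sum_congr rfl fun ω _ => ?_
              rw [hnormG]
              exact Finset.sum_congr rfl fun g _ => by rw [hrvec]
          _ = ∑ g : G, ∑ ω : Ω, (Y' (g⁻¹ • ω)) ^ 2 := Finset.sum_comm
          _ = ∑ g : G, ∑ ω : Ω, Y' ω ^ 2 :=
              Finset.sum_congr rfl fun g _ => sum_smul_reindex g (fun ω => Y' ω ^ 2)
          _ = (Fintype.card G : ℝ) * ∑ ω : Ω, Y' ω ^ 2 := by
              rw [Finset.sum_const, Finset.card_univ, nsmul_eq_mul]
      have hdm : lam * d ≤ lam * (Module.finrank ℝ E : ℝ) :=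
        mul_le_mul_of_nonneg_left hdE hlam0
      rw [hrnorm] at htrace
      linarith
  -- conclude
  rw [hgoal_lhs]
  have hdR : (0:ℝ) < d := by exact_mod_cast hdpos
  have hlamle : lam ≤ (Fintype.card G : ℝ) * (∑ ω : Ω, Y' ω ^ 2) / d := by
    rw [le_div_iff₀ hdR]
    exact hkey
  calc ‖S Xe‖ ^ 2 ≤ lam * ‖Xe‖ ^ 2 := hbound _
    _ ≤ ((Fintype.card G : ℝ) * (∑ ω : Ω, Y' ω ^ 2) / d) * ‖Xe‖ ^ 2 := by
        have := sq_nonneg ‖Xe‖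
        nlinarith
    _ = ((Fintype.card G : ℝ) / d) * (∑ g : G, X' g ^ 2) * (∑ ω : Ω, Y' ω ^ 2) := by
        rw [hX'2]; ring

end Aux

theorem convolution_bound_dH
    {G : Type*} [Group G] [Fintype G] {Ω : Type*} [Fintype Ω]
    [MulAction G Ω] [MulAction.IsPretransitive G Ω]
    (d : ℕ)
    (hd : IsLeast {k : ℕ | ∃ p : Submodule ℝ (Ω → ℝ),
      IsNontrivIrredComponent G p ∧ k = Module.finrank ℝ p} d)
    (X : G → ℝ) (hX0 : ∀ g, 0 ≤ X g) (hX1 : ∑ g : G, X g = 1)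
    (Y : Ω → ℝ) (hY0 : ∀ ω, 0 ≤ Y ω) (hY1 : ∑ ω : Ω, Y ω = 1) :
    norm2 (fun ω => convAct X Y ω - 1 / (Fintype.card Ω : ℝ)) ≤
      Real.sqrt ((Fintype.card G : ℝ) / (d : ℝ)) *
        norm2 (fun g => X g - 1 / (Fintype.card G : ℝ)) *
        norm2 (fun ω => Y ω - 1 / (Fintype.card Ω : ℝ)) := by
  classical
  rcases isEmpty_or_nonempty Ω with hΩ | hΩ
  · simp [norm2, mul_comm]
  set N := (Fintype.card G : ℝ) with hN
  set n := (Fintype.card Ω : ℝ) with hn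
  have hNpos : (0:ℝ) < N := by rw [hN]; exact_mod_cast Fintype.card_pos
  have hnpos : (0:ℝ) < n := by rw [hn]; exact_mod_cast Fintype.card_pos
  set X' : G → ℝ := fun g => X g - 1 / N with hX'
  set Y' : Ω → ℝ := fun ω => Y ω - 1 / n with hY'
  have hY'sum : ∑ ω : Ω, Y' ω = 0 := by
    simp only [hY', Finset.sum_sub_distrib, hY1, Finset.sum_const, Finset.card_univ, nsmul_eq_mul]
    field_simp
    rw [hn]; ring
  -- the column sums of Y are constant = N / n
  have hc : ∀ ω : Ω, ∑ g : G, Y (g⁻¹ • ω) = N / n := by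
    have hinv : ∀ (h : G) (ω : Ω), ∑ g : G, Y (g⁻¹ • (h • ω)) = ∑ g : G, Y (g⁻¹ • ω) := by
      intro h ω
      refine (Fintype.sum_bijective (fun g => h * g) (Group.mulLeft_bijective h)
        _ _ fun g => ?_).symm
      rw [mul_inv_rev, mul_smul, inv_smul_smul]
    have hconst : ∀ ω ω' : Ω, ∑ g : G, Y (g⁻¹ • ω) = ∑ g : G, Y (g⁻¹ • ω') := by
      intro ω ω'
      obtain ⟨h, hh⟩ := MulAction.exists_smul_eq G ω' ω
      rw [← hh, hinv]
    have htot : ∑ ω : Ω, ∑ g : G, Y (g⁻¹ • ω) = N := by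
      rw [Finset.sum_comm]
      have : ∀ g : G, ∑ ω : Ω, Y (g⁻¹ • ω) = 1 := by
        intro g; rw [sum_smul_reindex g Y, hY1]
      simp [this, hN]
    intro ω
    have : n * (∑ g : G, Y (g⁻¹ • ω)) = N := by
      rw [← htot]
      rw [Finset.sum_congr rfl fun ω' _ => hconst ω' ω]
      simp [Finset.sum_const, Finset.card_univ, hn, nsmul_eq_mul]
    field_simp at this ⊢
    linarith
  -- rewrite the deviation of the convolution
  have hconv : ∀ ω : Ω, convAct X Y ω - 1 / n = ∑ g : G, X' g * Y' (g⁻¹ • ω) := by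
    intro ω
    have expand : ∀ g : G, X' g * Y' (g⁻¹ • ω) =
        X g * Y (g⁻¹ • ω) - (1/n) * X g - (1/N) * Y (g⁻¹ • ω) + (1/N) * (1/n) := by
      intro g; simp only [hX', hY']; ring
    rw [Finset.sum_congr rfl fun g _ => expand g]
    simp only [Finset.sum_add_distrib, Finset.sum_sub_distrib, ← Finset.mul_sum, hX1, hc ω,
      Finset.sum_const, Finset.card_univ, nsmul_eq_mul]
    rw [convAct]
    field_simp
    rw [hN]; ring
  -- apply the key bound
  have hkb := key_bound d hd Y' hY'sum X'
  rw [norm2, norm2, norm2]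
  have hrw : (∑ ω : Ω, (convAct X Y ω - 1 / n) ^ 2) =
      ∑ ω : Ω, (∑ g : G, X' g * Y' (g⁻¹ • ω)) ^ 2 :=
    Finset.sum_congr rfl fun ω _ => by rw [hconv ω]
  rw [hrw]
  have h1 : Real.sqrt (∑ ω : Ω, (∑ g : G, X' g * Y' (g⁻¹ • ω)) ^ 2) ≤
      Real.sqrt ((N / d) * (∑ g : G, X' g ^ 2) * (∑ ω : Ω, Y' ω ^ 2)) :=
    Real.sqrt_le_sqrt hkb
  refine h1.trans (le_of_eq ?_)
  rw [Real.sqrt_mul (by positivity), Real.sqrt_mul (by positivity)]
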